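/- Let X = L¹([0,1]) be the real Lebesgue space of integrable functions on [0,1]. For every ε > 0 and every natural number n with n > 2/ε, and for every x, y in the unit sphere S(X), there exist y₁, …, yₙ ∈ l⁺(x, ε) and nonnegative reals λ₁, …, λₙ with Σ λᵢ = 1 such that y = Σ λᵢ yᵢ; that is, Daug_n(X, ε) = 0 whenever n > 2/ε. -/

import Mathlib

open MeasureTheory

/-- For `x` in the unit sphere of `X` and `ε > 0`,
`l⁺(x, ε) = {y : ‖y‖ ≤ 1 + ε and ‖x + y‖ > 2 - ε}`. -/
def lPlus {X : Type*} [NormedAddCommGroup X] (x : X) (ε : ℝ) : Set X :=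
  {y : X | ‖y‖ ≤ 1 + ε ∧ 2 - ε < ‖x + y‖}

private lemma abs_add_of_mul_nonneg' {p q : ℝ} (h : 0 ≤ p * q) : |p + q| = |p| + |q| := by
  rcases mul_nonneg_iff.mp h with ⟨hp, hq⟩ | ⟨hp, hq⟩
  · rw [abs_of_nonneg hp, abs_of_nonneg hq, abs_of_nonneg (add_nonneg hp hq)]
  · rw [abs_of_nonpos hp, abs_of_nonpos hq, abs_of_nonpos (add_nonpos hp hq)]; ring

private lemma lp_coeFn_finsetSum {α : Type*} [MeasurableSpace α] {μ : Measure α} {ι : Type*}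
    (s : Finset ι) (f : ι → Lp ℝ 1 μ) :
    (↑↑(∑ i ∈ s, f i) : α → ℝ) =ᵐ[μ] fun a => ∑ i ∈ s, (f i : α → ℝ) a := by
  classical
  induction s using Finset.induction_on with
  | empty => simp only [Finset.sum_empty]; exact Lp.coeFn_zero ℝ 1 μ
  | @insert a₀ s' h ih =>
      rw [Finset.sum_insert h]
      filter_upwards [Lp.coeFn_add (f a₀) (∑ i ∈ s', f i), ih] with a ha hia
      simp only [ha, Pi.add_apply, hia, Finset.sum_insert h]

private theorem L1_daug_aux (ε : ℝ) (hε : 0 < ε) (n : ℕ) (hn : 2 / ε < n)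
    (μ : Measure ℝ) [NullSingletonClass μ]
    (hμae : ∀ᵐ t ∂μ, t ∈ Set.Icc (0:ℝ) 1)
    (x y : Lp ℝ 1 μ) (hx : ‖x‖ = 1) (hy : ‖y‖ = 1) :
    ∃ (z : Fin n → Lp ℝ 1 μ) (lam : Fin n → ℝ),
      (∀ i, z i ∈ lPlus x ε) ∧ (∀ i, 0 ≤ lam i) ∧
      ∑ i, lam i = 1 ∧ y = ∑ i, lam i • z i := by
  classical
  have hnpos : 0 < (n:ℝ) := lt_of_le_of_lt (by positivity) hn
  have hn0 : n ≠ 0 := by exact_mod_cast hnpos.ne'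
  have hncast : (n:ℝ) ≠ 0 := hnpos.ne'
  have h2n : 2 / (n:ℝ) < ε := by
    rw [div_lt_iff₀ hnpos]
    rw [div_lt_iff₀ hε] at hn
    nlinarith
  -- measurable representatives
  set x' : ℝ → ℝ := (Lp.aestronglyMeasurable x).mk x with hx'def
  have hxx' : (x : ℝ → ℝ) =ᵐ[μ] x' := (Lp.aestronglyMeasurable x).ae_eq_mk
  have hx'meas : Measurable x' :=
    (Lp.aestronglyMeasurable x).stronglyMeasurable_mk.measurable
  have hxint : Integrable x' μ := (L1.integrable_coeFn x).congr hxx'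
  set y' : ℝ → ℝ := (Lp.aestronglyMeasurable y).mk y with hy'def
  have hyy' : (y : ℝ → ℝ) =ᵐ[μ] y' := (Lp.aestronglyMeasurable y).ae_eq_mk
  have hy'meas : Measurable y' :=
    (Lp.aestronglyMeasurable y).stronglyMeasurable_mk.measurable
  have hyint : Integrable y' μ := (L1.integrable_coeFn y).congr hyy'
  have hxabs : Integrable (fun s => |x' s|) μ := hxint.abs
  have hyabs : Integrable (fun s => |y' s|) μ := hyint.abs
  have hxnorm : ∫ s, |x' s| ∂μ = 1 := by
    rw [← hx, L1.norm_eq_integral_norm]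
    apply integral_congr_ae
    filter_upwards [hxx'] with s hs
    simp [← hs, Real.norm_eq_abs]
  have hynorm : ∫ s, |y' s| ∂μ = 1 := by
    rw [← hy, L1.norm_eq_integral_norm]
    apply integral_congr_ae
    filter_upwards [hyy'] with s hs
    simp [← hs, Real.norm_eq_abs]
  -- the primitive of |x'|
  set F : ℝ → ℝ := fun r => ∫ s in Set.Ioc 0 r, |x' s| ∂μ with hF
  have hFcont : ContinuousOn F (Set.Icc 0 1) :=
    intervalIntegral.continuousOn_primitive hxabs.integrableOn
  have hFmono : ∀ ⦃p q : ℝ⦄, p ≤ q → F p ≤ F q := by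
    intro p q hpq
    exact setIntegral_mono_set hxabs.integrableOn
      (Filter.Eventually.of_forall fun s => abs_nonneg _)
      (HasSubset.Subset.eventuallyLE (Set.Ioc_subset_Ioc_right hpq))
  have hF0 : F 0 = 0 := by simp [hF]
  have hμIoc : ∀ᵐ t ∂μ, t ∈ Set.Ioc (0:ℝ) 1 := by
    have h0 : ∀ᵐ t ∂μ, t ≠ 0 := by
      refine ae_iff.mpr ?_
      simpa using measure_singleton (0:ℝ)
    filter_upwards [hμae, h0] with t ht ht0
    exact ⟨lt_of_le_of_ne ht.1 (Ne.symm ht0), ht.2⟩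
  have hμres : μ.restrict (Set.Ioc 0 1) = μ := Measure.restrict_eq_self_of_ae_mem hμIoc
  have hF1 : F 1 = 1 := by
    show (∫ s, |x' s| ∂(μ.restrict (Set.Ioc 0 1))) = 1
    rw [hμres, hxnorm]
  -- the partition points
  have hex : ∀ i : ℕ, ∃ r, r ∈ Set.Icc (0:ℝ) 1 ∧ (i ≤ n → F r = i / n) ∧
      (i = 0 → r = 0) ∧ (i = n → r = 1) := by
    intro i
    rcases eq_or_ne i 0 with rfl | hi0
    · exact ⟨0, ⟨le_refl 0, zero_le_one⟩, fun _ => by simp [hF0], fun _ => rfl,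
        fun h => absurd h.symm hn0⟩
    rcases eq_or_ne i n with rfl | hin
    · refine ⟨1, ⟨zero_le_one, le_refl 1⟩, fun _ => ?_, fun h => absurd h hi0, fun _ => rfl⟩
      rw [hF1, eq_comm, div_eq_one_iff_eq hncast]
    rcases le_or_gt i n with hi | hi
    · have hmem : (i:ℝ)/n ∈ Set.Icc (F 0) (F 1) := by
        rw [hF0, hF1]
        constructor
        · positivity
        · rw [div_le_one hnpos]; exact_mod_cast hi
      obtain ⟨r, hr, hFr⟩ := intermediate_value_Icc zero_le_one hFcont hmem
      exact ⟨r, hr, fun _ => hFr, fun h => absurd h hi0, fun h => absurd h hin⟩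
    · exact ⟨0, ⟨le_refl 0, zero_le_one⟩, fun h => absurd h (not_le.mpr hi),
        fun h => absurd h hi0, fun h => absurd h hin⟩
  choose t htmem htF ht0 htn using hex
  have htlt : ∀ {i j : ℕ}, i ≤ n → j ≤ n → i < j → t i < t j := by
    intro i j hi hj hij
    by_contra h
    push_neg at h
    have h1 : F (t j) ≤ F (t i) := hFmono h
    rw [htF i hi, htF j hj] at h1
    have h2 : (i:ℝ) < j := by exact_mod_cast hij
    have h3 : (i:ℝ)/n < (j:ℝ)/n := by gcongr
    linarith
  have htle : ∀ {i j : ℕ}, i ≤ n → j ≤ n → i ≤ j → t i ≤ t j := by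
    intro i j hi hj hij
    rcases eq_or_lt_of_le hij with rfl | h
    · exact le_refl _
    · exact le_of_lt (htlt hi hj h)
  -- the partition sets
  set A : Fin n → Set ℝ := fun i => Set.Ioc (t i.1) (t (i.1 + 1)) with hA
  have hAmeas : ∀ i, MeasurableSet (A i) := fun i => measurableSet_Ioc
  have hmass : ∀ i : Fin n, ∫ s in A i, |x' s| ∂μ = 1 / n := by
    intro i
    have hi1 : (i:ℕ) ≤ n := le_of_lt i.2
    have hi2 : (i:ℕ) + 1 ≤ n := i.2
    have h0i : (0:ℝ) ≤ t i.1 := (htmem i.1).1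
    have hii : t i.1 ≤ t (i.1 + 1) := htle hi1 hi2 (Nat.le_succ _)
    have hunion : Set.Ioc (0:ℝ) (t i.1) ∪ Set.Ioc (t i.1) (t (i.1+1))
        = Set.Ioc 0 (t (i.1+1)) := Set.Ioc_union_Ioc_eq_Ioc h0i hii
    have hdisj : Disjoint (Set.Ioc (0:ℝ) (t i.1)) (Set.Ioc (t i.1) (t (i.1+1))) := by
      rw [Set.Ioc_disjoint_Ioc]
      exact (min_le_left _ _).trans (le_max_right _ _)
    have key := setIntegral_union hdisj measurableSet_Ioc hxabs.integrableOn hxabs.integrableOn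
    rw [hunion] at key
    have e1 : (∫ s in Set.Ioc (0:ℝ) (t (i.1+1)), |x' s| ∂μ) = F (t (i.1+1)) := rfl
    have e2 : (∫ s in Set.Ioc (0:ℝ) (t i.1), |x' s| ∂μ) = F (t i.1) := rfl
    rw [e1, e2, htF _ hi2, htF _ hi1] at key
    have : ((i:ℕ):ℝ)/n + 1/n = ((i:ℕ)+1 : ℕ)/n := by push_cast; ring
    rw [← this] at key
    linarith
  -- covering and uniqueness
  have hcover : ∀ s, s ∈ Set.Ioc (0:ℝ) 1 → ∃ i : Fin n, s ∈ A i := by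
    intro s hs
    have main : ∀ k : ℕ, k ≤ n → s ≤ t k → ∃ i : Fin n, s ∈ A i := by
      intro k
      induction k with
      | zero =>
          intro _ hsk
          rw [ht0 0 rfl] at hsk
          exact absurd hsk (not_le.mpr hs.1)
      | succ m ih =>
          intro hm hsk
          rcases le_or_gt s (t m) with h | h
          · exact ih (Nat.le_of_succ_le hm) h
          · exact ⟨⟨m, hm⟩, h, hsk⟩
    exact main n le_rfl (by rw [htn n rfl]; exact hs.2)
  have huniq : ∀ (s : ℝ) (i j : Fin n), s ∈ A i → s ∈ A j → i = j := by
    have key : ∀ (s : ℝ) (i j : Fin n), i < j → s ∈ A i → s ∈ A j → False := by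
      intro s i j hij hi hj
      have h1 : t ((i:ℕ)+1) ≤ t (j:ℕ) := htle i.2 (le_of_lt j.2) (by exact_mod_cast hij)
      have : s ≤ t (j:ℕ) := hi.2.trans h1
      exact lt_irrefl _ (lt_of_lt_of_le hj.1 this)
    intro s i j hi hj
    by_contra hne
    rcases lt_or_gt_of_ne hne with h | h
    · exact key s i j h hi hj
    · exact key s j i h hj hi
  -- the disagreement set
  set D : Set ℝ := {s | x' s * y' s < 0} with hD
  have hDmeas : MeasurableSet D := measurableSet_lt (hx'meas.mul hy'meas) measurable_const
  set aa : ℝ := ∫ s in Dᶜ, |y' s| ∂μ with haa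
  set bb : Fin n → ℝ := fun i => ∫ s in D ∩ A i, |y' s| ∂μ with hbb
  set lam : Fin n → ℝ := fun i => bb i + aa / n with hlam
  have haanonneg : 0 ≤ aa := setIntegral_nonneg hDmeas.compl fun s _ => abs_nonneg _
  have hbbnonneg : ∀ i, 0 ≤ bb i := fun i =>
    setIntegral_nonneg (hDmeas.inter (hAmeas i)) fun s _ => abs_nonneg _
  have hlamnonneg : ∀ i, 0 ≤ lam i := fun i => add_nonneg (hbbnonneg i) (by positivity)
  -- the pieces
  set g : Fin n → ℝ → ℝ :=
    fun i s => (D ∩ A i).indicator y' s + (n:ℝ)⁻¹ * (Dᶜ.indicator y' s) with hg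
  have hgint : ∀ i, Integrable (g i) μ := fun i =>
    (hyint.indicator (hDmeas.inter (hAmeas i))).add
      ((hyint.indicator hDmeas.compl).const_mul _)
  have hgabs : ∀ i s, |g i s| = (D ∩ A i).indicator (fun u => |y' u|) s
      + (n:ℝ)⁻¹ * (Dᶜ.indicator (fun u => |y' u|) s) := by
    intro i s
    simp only [hg]
    by_cases hsD : s ∈ D
    · have h1 : s ∉ Dᶜ := by simpa using hsD
      rw [Set.indicator_of_notMem h1, Set.indicator_of_notMem h1]
      by_cases hsA : s ∈ A i
      · rw [Set.indicator_of_mem (Set.mem_inter hsD hsA),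
          Set.indicator_of_mem (Set.mem_inter hsD hsA)]
        simp
      · have h2 : s ∉ D ∩ A i := fun h => hsA h.2
        rw [Set.indicator_of_notMem h2, Set.indicator_of_notMem h2]
        simp
    · have h2 : s ∉ D ∩ A i := fun h => hsD h.1
      rw [Set.indicator_of_notMem h2, Set.indicator_of_notMem h2,
        Set.indicator_of_mem (Set.mem_compl hsD), Set.indicator_of_mem (Set.mem_compl hsD)]
      rw [zero_add, zero_add, abs_mul, abs_of_nonneg (inv_nonneg.mpr (le_of_lt hnpos))]
  have hgnorm : ∀ i, ∫ s, |g i s| ∂μ = lam i := by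
    intro i
    have i1 : Integrable (fun s => (D ∩ A i).indicator (fun u => |y' u|) s) μ :=
      hyabs.indicator (hDmeas.inter (hAmeas i))
    have i2 : Integrable (fun s => (n:ℝ)⁻¹ * (Dᶜ.indicator (fun u => |y' u|) s)) μ :=
      (hyabs.indicator hDmeas.compl).const_mul _
    simp only [hgabs]
    rw [integral_add i1 i2, integral_const_mul, integral_indicator (hDmeas.inter (hAmeas i)),
      integral_indicator hDmeas.compl]
    simp only [hlam, hbb, haa]
    rw [inv_mul_eq_div]
  -- sum of lambdas is 1
  have hDsub : (D ∩ ⋃ i, A i : Set ℝ) =ᵐ[μ] D := by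
    have hU : ∀ᵐ s ∂μ, s ∈ ⋃ i, A i := by
      filter_upwards [hμIoc] with s hs
      exact Set.mem_iUnion.mpr (hcover s hs)
    filter_upwards [hU] with s hs
    simp only [eq_iff_iff, Set.mem_inter_iff]
    exact ⟨fun h => h.1, fun h => ⟨h, hs⟩⟩
  have hbbsum : ∑ i, bb i = ∫ s in D, |y' s| ∂μ := by
    rw [← setIntegral_congr_set hDsub, Set.inter_iUnion,
      integral_iUnion_fintype (fun i => hDmeas.inter (hAmeas i))
        (fun i j hij => Set.disjoint_left.mpr fun s hsi hsj =>
          hij (huniq s i j hsi.2 hsj.2))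
        (fun i => hyabs.integrableOn)]
  have hlamsum : ∑ i, lam i = 1 := by
    have hDc := integral_add_compl hDmeas hyabs
    rw [hynorm] at hDc
    simp only [hlam]
    rw [Finset.sum_add_distrib, hbbsum, Finset.sum_const, Finset.card_univ, Fintype.card_fin,
      nsmul_eq_mul]
    rw [mul_div_cancel₀ _ hncast]
    linarith
  -- the functions defining z
  set w : Fin n → ℝ → ℝ := fun i s => (lam i)⁻¹ * g i s with hw
  have hwint : ∀ i, Integrable (w i) μ := fun i => (hgint i).const_mul _
  have hwmem : ∀ i, MemLp (w i) 1 μ := fun i => memLp_one_iff_integrable.mpr (hwint i)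
  have hgmem : ∀ i, MemLp (g i) 1 μ := fun i => memLp_one_iff_integrable.mpr (hgint i)
  set z : Fin n → Lp ℝ 1 μ := fun i => if lam i = 0 then x else (hwmem i).toLp (w i) with hz
  -- the convex combination identity
  have hterm : ∀ i, lam i • z i = (hgmem i).toLp (g i) := by
    intro i
    rcases eq_or_ne (lam i) 0 with h0 | h0
    · have hgz : g i =ᵐ[μ] 0 := by
        have hint0 : ∫ s, |g i s| ∂μ = 0 := by rw [hgnorm i, h0]
        have habs0 := (integral_eq_zero_iff_of_nonneg (fun s => abs_nonneg _)
          (hgint i).abs).mp hint0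
        filter_upwards [habs0] with s hs
        simpa using hs
      rw [h0, zero_smul]
      rw [show ((hgmem i).toLp (g i)) = (MemLp.zero : MemLp (0 : ℝ → ℝ) 1 μ).toLp 0 from
        (MemLp.toLp_eq_toLp_iff _ _).mpr hgz, MemLp.toLp_zero]
    · simp only [hz, if_neg h0]
      rw [← MemLp.toLp_const_smul (lam i) (hwmem i)]
      apply MemLp.toLp_congr
      refine Filter.Eventually.of_forall fun s => ?_
      show lam i • ((lam i)⁻¹ * g i s) = g i s
      rw [smul_eq_mul, ← mul_assoc, mul_inv_cancel₀ h0, one_mul]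
  have hsum : y = ∑ i, lam i • z i := by
    have h1 : ∑ i, lam i • z i = ∑ i, (hgmem i).toLp (g i) := by
      exact Finset.sum_congr rfl fun i _ => hterm i
    rw [h1]
    apply Lp.ext
    have h2 := lp_coeFn_finsetSum Finset.univ (fun i => (hgmem i).toLp (g i))
    have h3 : ∀ i : Fin n, (((hgmem i).toLp (g i)) : ℝ → ℝ) =ᵐ[μ] g i :=
      fun i => MemLp.coeFn_toLp _
    have h4 : ∀ᵐ s ∂μ, ∀ i : Fin n, (((hgmem i).toLp (g i)) : ℝ → ℝ) s = g i s :=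
      (MeasureTheory.ae_all_iff).mpr h3
    have h5 : (fun s => ∑ i, g i s) =ᵐ[μ] (y : ℝ → ℝ) := by
      filter_upwards [hμIoc, hyy'] with s hs hys
      have key : ∑ i, g i s = y' s := by
        simp only [hg]
        rw [Finset.sum_add_distrib]
        by_cases hsD : s ∈ D
        · obtain ⟨i₀, hi₀⟩ := hcover s hs
          have e1 : ∑ i, (D ∩ A i).indicator y' s = y' s := by
            rw [Finset.sum_eq_single i₀]
            · exact Set.indicator_of_mem (Set.mem_inter hsD hi₀) _
            · intro i _ hne
              apply Set.indicator_of_notMem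
              exact fun h => hne (huniq s i i₀ h.2 hi₀)
            · intro h
              exact absurd (Finset.mem_univ i₀) h
          have e2 : ∀ i : Fin n, (n:ℝ)⁻¹ * (Dᶜ.indicator y' s) = 0 := by
            intro i
            rw [Set.indicator_of_notMem (by simpa using hsD)]
            ring
          rw [e1, Finset.sum_congr rfl fun i _ => e2 i, Finset.sum_const_zero, add_zero]
        · have e1 : ∀ i : Fin n, (D ∩ A i).indicator y' s = 0 :=
            fun i => Set.indicator_of_notMem (fun h => hsD h.1) _
          rw [Finset.sum_congr rfl fun i _ => e1 i, Finset.sum_const_zero, zero_add,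
            Set.indicator_of_mem (Set.mem_compl hsD), Finset.sum_const, Finset.card_univ,
            Fintype.card_fin, nsmul_eq_mul, ← mul_assoc, mul_inv_cancel₀ hncast, one_mul]
      rw [key, ← hys]
    symm
    calc (↑↑(∑ i, (hgmem i).toLp (g i)) : ℝ → ℝ)
        =ᵐ[μ] fun s => ∑ i, (((hgmem i).toLp (g i)) : ℝ → ℝ) s := h2
      _ =ᵐ[μ] fun s => ∑ i, g i s := by
          filter_upwards [h4] with s hs
          exact Finset.sum_congr rfl fun i _ => hs i
      _ =ᵐ[μ] (y : ℝ → ℝ) := h5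
  -- norm computations
  have hwnorm : ∀ i, lam i ≠ 0 → ∫ s, |w i s| ∂μ = 1 := by
    intro i h0
    have hpos : 0 < lam i := lt_of_le_of_ne (hlamnonneg i) (Ne.symm h0)
    have : ∀ s, |w i s| = (lam i)⁻¹ * |g i s| := by
      intro s
      simp only [hw]
      rw [abs_mul, abs_of_nonneg (inv_nonneg.mpr (le_of_lt hpos))]
    simp only [this]
    rw [integral_const_mul, hgnorm i, inv_mul_cancel₀ h0]
  have hmem : ∀ i, z i ∈ lPlus x ε := by
    intro i
    rcases eq_or_ne (lam i) 0 with h0 | h0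
    · simp only [hz, if_pos h0]
      constructor
      · rw [hx]; linarith
      · have : ‖x + x‖ = 2 := by
          rw [← two_smul ℝ x, norm_smul, hx]
          simp
        rw [this]; linarith
    · have hpos : 0 < lam i := lt_of_le_of_ne (hlamnonneg i) (Ne.symm h0)
      have hzeq : z i = (hwmem i).toLp (w i) := by simp only [hz, if_neg h0]
      have hzcoe : (z i : ℝ → ℝ) =ᵐ[μ] w i := by
        rw [hzeq]; exact MemLp.coeFn_toLp _
      have hznorm : ‖z i‖ = 1 := by
        rw [L1.norm_eq_integral_norm, ← hwnorm i h0]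
        apply integral_congr_ae
        filter_upwards [hzcoe] with s hs
        rw [hs, Real.norm_eq_abs]
      constructor
      · rw [hznorm]; linarith
      · -- the main estimate
        have hnormadd : ‖x + z i‖ = ∫ s, |x' s + w i s| ∂μ := by
          rw [L1.norm_eq_integral_norm]
          apply integral_congr_ae
          filter_upwards [Lp.coeFn_add x (z i), hxx', hzcoe] with s hs1 hs2 hs3
          rw [hs1, Pi.add_apply, hs2, hs3, Real.norm_eq_abs]
        have hpt : ∀ s, |x' s| + |w i s| - 2 * ((A i).indicator (fun u => |x' u|) s)
            ≤ |x' s + w i s| := by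
          intro s
          by_cases hsA : s ∈ A i
          · rw [Set.indicator_of_mem hsA]
            have h1 : |w i s| ≤ |x' s + w i s| + |x' s| := by
              have := abs_add_le (x' s + w i s) (-(x' s))
              simpa using this
            linarith
          · rw [Set.indicator_of_notMem hsA]
            have hmul : 0 ≤ x' s * w i s := by
              have hgA : (D ∩ A i).indicator y' s = 0 :=
                Set.indicator_of_notMem (fun h => hsA h.2) _
              by_cases hsD : s ∈ D
              · have : w i s = 0 := by
                  simp only [hw, hg, hgA, Set.indicator_of_notMem (by simpa using hsD : s ∉ Dᶜ)]
                  ring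
                rw [this]; simp
              · have hxys : 0 ≤ x' s * y' s := le_of_not_gt hsD
                have : w i s = ((lam i)⁻¹ * (n:ℝ)⁻¹) * y' s := by
                  simp only [hw, hg, hgA, Set.indicator_of_mem (Set.mem_compl hsD)]
                  ring
                rw [this]
                have : x' s * ((lam i)⁻¹ * (n:ℝ)⁻¹ * y' s)
                    = ((lam i)⁻¹ * (n:ℝ)⁻¹) * (x' s * y' s) := by ring
                rw [this]
                apply mul_nonneg _ hxys
                positivity
            rw [abs_add_of_mul_nonneg' hmul]
            linarith
        have hAind : ∫ s, (A i).indicator (fun u => |x' u|) s ∂μ = 1 / n := by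
          rw [integral_indicator (hAmeas i)]
          exact hmass i
        have hwabs : Integrable (fun s => |w i s|) μ := (hwint i).abs
        have hint1 : Integrable (fun s => |x' s + w i s|) μ := (hxint.add (hwint i)).abs
        have hint3 : Integrable (fun s => |x' s| + |w i s|) μ := hxabs.add hwabs
        have hint4 : Integrable (fun s => 2 * ((A i).indicator (fun u => |x' u|) s)) μ :=
          (hxabs.indicator (hAmeas i)).const_mul 2
        have hint2 : Integrable
            (fun s => |x' s| + |w i s| - 2 * ((A i).indicator (fun u => |x' u|) s)) μ :=
          hint3.sub hint4
        have hineq := integral_mono hint2 hint1 hpt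
        rw [integral_sub hint3 hint4, integral_add hxabs hwabs, integral_const_mul, hAind,
          hxnorm, hwnorm i h0] at hineq
        rw [hnormadd]
        have : (2:ℝ) - ε < 1 + 1 - 2 * (1/n) := by
          rw [mul_one_div]
          linarith
        linarith
  exact ⟨z, lam, hmem, hlamnonneg, hlamsum, hsum⟩

theorem L1_daugN_eq_zero
    (ε : ℝ) (hε : 0 < ε) (n : ℕ) (hn : 2 / ε < n)
    (x y : Lp ℝ 1 ((volume : Measure ℝ).restrict (Set.Icc 0 1)))
    (hx : ‖x‖ = 1) (hy : ‖y‖ = 1) :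
    ∃ (z : Fin n → Lp ℝ 1 ((volume : Measure ℝ).restrict (Set.Icc 0 1)))
      (lam : Fin n → ℝ),
      (∀ i, z i ∈ lPlus x ε) ∧ (∀ i, 0 ≤ lam i) ∧
      ∑ i, lam i = 1 ∧ y = ∑ i, lam i • z i := by
  exact L1_daug_aux ε hε n hn _ (ae_restrict_mem measurableSet_Icc) x y hx hy
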